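/- Frobenius reciprocity for the fusion rules: for all words x, y, z ∈ I one has m(z; x̄, y) = m(y; x, z). -/

import Mathlib

open Filter Topology MeasureTheory

/-- Words in the free monoid on two letters `α = true`, `β = false`. -/
abbrev Word := List Bool

/-- Conjugation: reverse the word and swap the two letters. -/
def wconj (x : Word) : Word := x.reverse.map (fun b => !b)

/-- Fusion multiplicity `m(z; x, y)`: the number of triples `(x₀, w, y₀)` with
`x = x₀w`, `y = w̄y₀` and `z = x₀y₀`. -/
def fm (x y z : Word) : ℕ :=
  ((Finset.range (x.length + 1)).filter (fun k =>
    wconj (x.drop k) <+: y ∧ z = x.take k ++ y.drop (x.length - k))).card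

/-- Maximal alternating blocks of a word. -/
def blocks : Word → List Word
  | [] => []
  | a :: rest =>
    match blocks rest with
    | [] => [[a]]
    | b :: bs => if b.head? = some a then [a] :: b :: bs else (a :: b) :: bs

/-- The quantum integer `[n]_q = (qⁿ - q⁻ⁿ)/(q - q⁻¹)`. -/
noncomputable def qnum (q : ℝ) (n : ℕ) : ℝ := (q ^ n - q⁻¹ ^ n) / (q - q⁻¹)

/-- Quantum dimension `dim_q(x) = ∏ᵢ [|xᵢ|+1]_q` over the maximal alternating blocks. -/
noncomputable def dimq (q : ℝ) (x : Word) : ℝ :=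
  ((blocks x).map (fun b => qnum q (b.length + 1))).prod

/-- Classical dimension `dim₁(x) = ∏ᵢ (|xᵢ|+1)` over the maximal alternating blocks. -/
def dim1 (x : Word) : ℕ := ((blocks x).map (fun b => b.length + 1)).prod


lemma wconj_wconj (x : Word) : wconj (wconj x) = x := by
  have h : ((fun b => !b) ∘ fun b : Bool => !b) = id := by funext b; simp
  simp [wconj, h]

lemma wconj_length (x : Word) : (wconj x).length = x.length := by simp [wconj]

lemma wconj_drop (x : Word) (k : ℕ) : (wconj x).drop k = wconj (x.take (x.length - k)) := by
  simp [wconj, List.drop_reverse, List.take_reverse]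

lemma wconj_take (x : Word) (k : ℕ) : (wconj x).take k = wconj (x.drop (x.length - k)) := by
  simp [wconj, List.drop_reverse, List.take_reverse]

lemma key_frobenius (x y z : Word) (j : ℕ) (hj : j ≤ x.length) :
    (x.take j <+: y ∧ z = wconj (x.drop j) ++ y.drop j) ↔
    (wconj (x.drop j) <+: z ∧ y = x.take j ++ z.drop (x.length - j)) := by
  have hl : (wconj (x.drop j)).length = x.length - j := by simp [wconj_length]
  have hlt : (x.take j).length = j := by simp [hj]
  constructor
  · rintro ⟨h1, h2⟩
    have hdz : z.drop (x.length - j) = y.drop j := by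
      rw [h2, List.drop_left' hl]
    refine ⟨⟨y.drop j, h2.symm⟩, ?_⟩
    obtain ⟨t, ht⟩ := h1
    have h3 := congrArg (List.drop (x.take j).length) ht
    rw [List.drop_left, hlt] at h3
    rw [hdz, ← h3, ht]
  · rintro ⟨h1, h2⟩
    have hdy : y.drop j = z.drop (x.length - j) := by
      rw [h2, List.drop_left' hlt]
    obtain ⟨t, ht⟩ := h1
    have h3 := congrArg (List.drop (wconj (x.drop j)).length) ht
    rw [List.drop_left, hl] at h3
    exact ⟨⟨z.drop (x.length - j), h2.symm⟩, by rw [hdy, ← h3, ht]⟩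

lemma main_iff_frobenius (x y z : Word) (k : ℕ) (hk : k ≤ x.length) :
    (wconj ((wconj x).drop k) <+: y ∧ z = (wconj x).take k ++ y.drop (x.length - k)) ↔
    (wconj (x.drop (x.length - k)) <+: z ∧ y = x.take (x.length - k) ++ z.drop k) := by
  have h := key_frobenius x y z (x.length - k) (Nat.sub_le _ _)
  rw [show x.length - (x.length - k) = k from by omega] at h
  rw [wconj_drop, wconj_take, wconj_wconj]
  exact h

/-- Frobenius reciprocity for the fusion rules: `m(z; x̄, y) = m(y; x, z)`. -/
theorem fusion_frobenius (x y z : Word) : fm (wconj x) y z = fm x z y := by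
  simp only [fm, wconj_length]
  apply Finset.card_nbij' (fun k => x.length - k) (fun j => x.length - j)
  · intro k hk
    simp only [Finset.mem_coe, Finset.mem_filter, Finset.mem_range] at hk ⊢
    refine ⟨by omega, ?_⟩
    rw [show x.length - (x.length - k) = k from by omega]
    exact (main_iff_frobenius x y z k (by omega)).1 hk.2
  · intro j hj
    simp only [Finset.mem_coe, Finset.mem_filter, Finset.mem_range] at hj ⊢
    refine ⟨by omega, (main_iff_frobenius x y z (x.length - j) (by omega)).2 ?_⟩
    rw [show x.length - (x.length - j) = j from by omega]
    exact hj.2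
  · intro k hk
    simp only [Finset.mem_coe, Finset.mem_filter, Finset.mem_range] at hk
    beta_reduce
    omega
  · intro j hj
    simp only [Finset.mem_coe, Finset.mem_filter, Finset.mem_range] at hj
    beta_reduce
    omega
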